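/- arXiv:1211.3894 — 4 statements merged into one kernel-verified Lean document; each statement's English description precedes it below -/
import Mathlib

section
/- Let F, G : X → X₋₁ be Lipschitz with best Lipschitz constants |F|_Lip, |G|_Lip satisfying (|F|_Lip + |G|_Lip)/2 < 1. If x, y ∈ X satisfy Cx = F(x) and Cy = G(y), then ‖x − y‖_X ≤ (1 − (|F|_Lip + |G|_Lip)/2)⁻¹ · sup_{u∈X} ‖F(u) − G(u)‖_{X₋₁}. -/
/-- Continuous dependence. `C : X ≃ₗᵢ X₋₁` the isometric extension;
`F, G : X → X₋₁` Lipschitz with best constants `LF, LG` with `(LF+LG)/2 < 1`.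
If `Cx = F x` and `Cy = G y`, then for every uniform bound `M` on `‖F u − G u‖`
(so in particular for the supremum), `‖x − y‖ ≤ (1 − (LF+LG)/2)⁻¹ · M`. -/
theorem stmt3
    {X Xm1 : Type*} [NormedAddCommGroup X] [NormedSpace ℝ X] [CompleteSpace X]
    [NormedAddCommGroup Xm1] [NormedSpace ℝ Xm1]
    (C : X ≃ₗᵢ[ℝ] Xm1) (F G : X → Xm1) (LF LG : NNReal)
    (hFG : ((LF : ℝ) + LG) / 2 < 1)
    (hF : LipschitzWith LF F) (hG : LipschitzWith LG G)
    (x y : X) (hx : C x = F x) (hy : C y = G y)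
    (M : ℝ) (hM : ∀ u : X, ‖F u - G u‖ ≤ M) :
    ‖x - y‖ ≤ (1 - ((LF : ℝ) + LG) / 2)⁻¹ * M := by
  set L : ℝ := ((LF : ℝ) + LG) / 2 with hL
  have hLpos : 0 < 1 - L := by linarith
  have hd : ‖x - y‖ = ‖F x - G y‖ := by
    rw [← hx, ← hy, ← map_sub, C.norm_map]
  have h1 : ‖F x - G y‖ ≤ M + (LG : ℝ) * ‖x - y‖ := by
    calc ‖F x - G y‖ = ‖(F x - G x) + (G x - G y)‖ := by rw [sub_add_sub_cancel]
      _ ≤ ‖F x - G x‖ + ‖G x - G y‖ := norm_add_le _ _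
      _ ≤ M + (LG : ℝ) * ‖x - y‖ := by
          refine add_le_add (hM x) ?_
          have := hG.dist_le_mul x y
          simpa [dist_eq_norm] using this
  have h2 : ‖F x - G y‖ ≤ (LF : ℝ) * ‖x - y‖ + M := by
    calc ‖F x - G y‖ = ‖(F x - F y) + (F y - G y)‖ := by rw [sub_add_sub_cancel]
      _ ≤ ‖F x - F y‖ + ‖F y - G y‖ := norm_add_le _ _
      _ ≤ (LF : ℝ) * ‖x - y‖ + M := by
          refine add_le_add ?_ (hM y)
          have := hF.dist_le_mul x y
          simpa [dist_eq_norm] using this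
  have key : (1 - L) * ‖x - y‖ ≤ M := by
    rw [← hd] at h1 h2
    rw [hL]
    linarith
  calc ‖x - y‖ = (1 - L)⁻¹ * ((1 - L) * ‖x - y‖) := by
        field_simp
    _ ≤ (1 - L)⁻¹ * M := by
        exact mul_le_mul_of_nonneg_left key (le_of_lt (inv_pos.2 hLpos))
end

section
/- For p ∈ (1,∞), ν > 0, and X a Banach space, the history-segment operator Θ : L_{p,ν}(ℝ;X) → L_{p,ν}(ℝ; L_p(ℝ_{<0};X)), f ↦ (t ↦ (θ ↦ f(t+θ))), is bounded with operator norm exactly (pν)^{−1/p}. -/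
open MeasureTheory Real Set

/-- Auxiliary: the key identity for a measurable `G : ℝ → ENNReal`. -/
lemma stmt10_key (G : ℝ → ENNReal) (hG : Measurable G) (a : ℝ) (ha : 0 < a) :
    ∫⁻ t, (∫⁻ θ in Set.Iio (0 : ℝ), G (t + θ))
        * ENNReal.ofReal (Real.exp (-(a * t)))
      = ENNReal.ofReal (1 / a) *
        ∫⁻ t, G t * ENNReal.ofReal (Real.exp (-(a * t))) := by
  -- Step 1: translation of the inner integral
  have step1 : ∀ t : ℝ, (∫⁻ θ in Set.Iio (0 : ℝ), G (t + θ))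
      = ∫⁻ s, (Set.Iio t).indicator G s := by
    intro t
    rw [← lintegral_indicator measurableSet_Iio,
      ← lintegral_add_left_eq_self (fun s => (Set.Iio t).indicator G s) t]
    refine lintegral_congr fun θ => ?_
    by_cases h : θ < 0
    · simp [Set.indicator_apply, h, show t + θ < t by linarith]
    · simp [Set.indicator_apply, h, show ¬ t + θ < t by simp; linarith]
  -- exponential integral
  have hexp : ∀ s : ℝ, (∫⁻ t in Set.Ioi s, ENNReal.ofReal (Real.exp (-(a * t))))
      = ENNReal.ofReal (Real.exp (-(a * s)) * (1 / a)) := by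
    intro s
    have hint : IntegrableOn (fun t => Real.exp (-(a * t))) (Set.Ioi s) := by
      simpa [neg_mul] using exp_neg_integrableOn_Ioi s ha
    rw [← ofReal_integral_eq_lintegral_ofReal hint
      (Filter.Eventually.of_forall fun t => (Real.exp_pos _).le)]
    congr 1
    have := integral_comp_mul_left_Ioi (fun x => Real.exp (-x)) s ha
    rw [integral_exp_neg_Ioi] at this
    rw [this, smul_eq_mul]
    ring
  have hGm : Measurable fun q : ℝ × ℝ =>
      Set.indicator {q : ℝ × ℝ | q.2 < q.1} (fun q : ℝ × ℝ => G q.2) q *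
        ENNReal.ofReal (Real.exp (-(a * q.1))) := by
    refine Measurable.mul ?_ ?_
    · exact (hG.comp measurable_snd).indicator
        (measurableSet_lt measurable_snd measurable_fst)
    · exact ((measurable_const.mul measurable_fst).neg.exp).ennreal_ofReal
  calc
    ∫⁻ t, (∫⁻ θ in Set.Iio (0 : ℝ), G (t + θ)) * ENNReal.ofReal (Real.exp (-(a * t)))
        = ∫⁻ t, ∫⁻ s, Set.indicator {q : ℝ × ℝ | q.2 < q.1}
            (fun q : ℝ × ℝ => G q.2) (t, s) * ENNReal.ofReal (Real.exp (-(a * t))) := by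
          refine lintegral_congr fun t => ?_
          rw [step1 t, ← lintegral_mul_const _ ((hG.indicator measurableSet_Iio))]
          refine lintegral_congr fun s => ?_
          by_cases h : s < t <;> simp [Set.indicator_apply, h]
    _ = ∫⁻ s, ∫⁻ t, Set.indicator {q : ℝ × ℝ | q.2 < q.1}
            (fun q : ℝ × ℝ => G q.2) (t, s) * ENNReal.ofReal (Real.exp (-(a * t))) := by
          exact lintegral_lintegral_swap hGm.aemeasurable
    _ = ∫⁻ s, G s * ENNReal.ofReal (Real.exp (-(a * s)) * (1 / a)) := by
          refine lintegral_congr fun s => ?_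
          have : ∀ t : ℝ, Set.indicator {q : ℝ × ℝ | q.2 < q.1}
              (fun q : ℝ × ℝ => G q.2) (t, s) * ENNReal.ofReal (Real.exp (-(a * t)))
              = (Set.Ioi s).indicator
                  (fun t => G s * ENNReal.ofReal (Real.exp (-(a * t)))) t := by
            intro t
            by_cases h : s < t <;> simp [Set.indicator_apply, h, Set.mem_Ioi]
          simp_rw [this]
          rw [lintegral_indicator measurableSet_Ioi,
            lintegral_const_mul _ (show Measurable fun t : ℝ => ENNReal.ofReal (Real.exp (-(a * t))) from ((measurable_id.const_mul a).neg.exp).ennreal_ofReal),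
            hexp s]
    _ = ENNReal.ofReal (1 / a) * ∫⁻ t, G t * ENNReal.ofReal (Real.exp (-(a * t))) := by
          rw [← lintegral_const_mul' _ _ ENNReal.ofReal_ne_top]
          refine lintegral_congr fun s => ?_
          rw [ENNReal.ofReal_mul (Real.exp_pos _).le]
          ring

/-- For `p ∈ (1,∞)`, `ν > 0`, the history-segment operator
`Θ : f ↦ (t ↦ (θ ↦ f(t+θ)))` from `L_{p,ν}(ℝ;X)` to `L_{p,ν}(ℝ;L_p(ℝ_{<0};X))`
satisfies `‖Θf‖_{p,ν}^p = (pν)^{-1}·‖f‖_{p,ν}^p` for every `f`, i.e. its operator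
norm is exactly `(pν)^{−1/p}`.  This is expressed via the defining double
integral identity
`∫_ℝ (∫_{θ<0} ‖f(t+θ)‖^p dθ)·e^{−νpt} dt = (pν)⁻¹·∫_ℝ ‖f(t)‖^p·e^{−νpt} dt`. -/
theorem stmt10
    {X : Type*} [NormedAddCommGroup X] [NormedSpace ℝ X]
    (p : ℝ) (hp : 1 < p) (ν : ℝ) (hν : 0 < ν)
    (f : ℝ → X) (hf : AEStronglyMeasurable f (volume : Measure ℝ)) :
    ∫⁻ t, (∫⁻ θ in Set.Iio (0 : ℝ), (‖f (t + θ)‖₊ : ENNReal) ^ p)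
        * ENNReal.ofReal (Real.exp (-ν * p * t))
      = ENNReal.ofReal (1 / (p * ν)) *
        ∫⁻ t, (‖f t‖₊ : ENNReal) ^ p * ENNReal.ofReal (Real.exp (-ν * p * t)) := by
  set g : ℝ → X := hf.mk f with hg_def
  have hg : StronglyMeasurable g := hf.stronglyMeasurable_mk
  have hfg : f =ᵐ[volume] g := hf.ae_eq_mk
  set G : ℝ → ENNReal := fun s => (‖g s‖₊ : ENNReal) ^ p with hG_def
  have hGm : Measurable G := hg.nnnorm.measurable.coe_nnreal_ennreal.pow_const p
  have ha : 0 < ν * p := mul_pos hν (lt_trans one_pos hp)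
  have hae : -ν * p = -(ν * p) := by ring
  -- replace f by g in the inner integrals (valid for every t)
  have hinner : ∀ t : ℝ, (∫⁻ θ in Set.Iio (0 : ℝ), (‖f (t + θ)‖₊ : ENNReal) ^ p)
      = ∫⁻ θ in Set.Iio (0 : ℝ), G (t + θ) := by
    intro t
    refine lintegral_congr_ae (ae_restrict_of_ae ?_)
    have h1 : MeasurePreserving (fun θ : ℝ => t + θ) volume volume :=
      measurePreserving_add_left volume t
    have h2 : (fun θ : ℝ => f (t + θ)) =ᵐ[volume] fun θ : ℝ => g (t + θ) :=
      h1.quasiMeasurePreserving.ae_eq_comp hfg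
    exact h2.mono fun θ hθ => by simp only [hθ, hG_def]
  have houter : ∀ t : ℝ, ENNReal.ofReal (Real.exp (-ν * p * t))
      = ENNReal.ofReal (Real.exp (-(ν * p * t))) := by
    intro t; congr 1; ring_nf
  have hRHS : (∫⁻ t, (‖f t‖₊ : ENNReal) ^ p * ENNReal.ofReal (Real.exp (-ν * p * t)))
      = ∫⁻ t, G t * ENNReal.ofReal (Real.exp (-(ν * p * t))) := by
    refine lintegral_congr_ae (hfg.mono fun t ht => ?_)
    simp only [ht, neg_mul, hG_def]
  calc
    ∫⁻ t, (∫⁻ θ in Set.Iio (0 : ℝ), (‖f (t + θ)‖₊ : ENNReal) ^ p)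
        * ENNReal.ofReal (Real.exp (-ν * p * t))
      = ∫⁻ t, (∫⁻ θ in Set.Iio (0 : ℝ), G (t + θ))
          * ENNReal.ofReal (Real.exp (-(ν * p * t))) := by
        refine lintegral_congr fun t => ?_
        rw [hinner t, houter t]
    _ = ENNReal.ofReal (1 / (ν * p)) *
          ∫⁻ t, G t * ENNReal.ofReal (Real.exp (-(ν * p * t))) := by
        simpa only [mul_assoc] using stmt10_key G hGm (ν * p) ha
    _ = ENNReal.ofReal (1 / (p * ν)) *
          ∫⁻ t, (‖f t‖₊ : ENNReal) ^ p * ENNReal.ofReal (Real.exp (-ν * p * t)) := by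
        rw [hRHS, mul_comm ν p]
end

section
/- In the Hilbert space case p = 2 with X = H a Hilbert space, the history operator Θ : L_{2,ν}(ℝ;H) → L_{2,ν}(ℝ; L_2(ℝ_{<0};H)) satisfies ⟨Θx, Θx⟩ = (2ν)⁻¹ ⟨x, x⟩ for all x ∈ L_{2,ν}(ℝ;H); consequently Θ has closed range and √(2ν)·Θ is an isometry onto its range. -/
open MeasureTheory Real
open scoped ENNReal NNReal

open Set MeasureTheory.Measure in
private lemma stmt11_aux
    {H : Type*} [NormedAddCommGroup H] [InnerProductSpace ℝ H]
    (ν : ℝ) (hν : 0 < ν)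
    (y : ℝ → H) (hym : StronglyMeasurable y)
    (hfin : ∫⁻ s, ENNReal.ofReal (‖y s‖ ^ 2) * ENNReal.ofReal (Real.exp (-2 * ν * s)) < ⊤) :
    ∫ t, (∫ θ in Set.Iio (0 : ℝ), ‖y (t + θ)‖ ^ 2)
        * Real.exp (-2 * ν * t)
      = (2 * ν)⁻¹ * ∫ t, ‖y t‖ ^ 2 * Real.exp (-2 * ν * t) := by
  have h2ν : (0:ℝ) < 2 * ν := by linarith
  set w : ℝ → ℝ≥0∞ := fun t => ENNReal.ofReal (Real.exp (-2 * ν * t)) with hw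
  have hwm : Measurable w := by
    fun_prop
  set G : ℝ → ℝ := fun s => ‖y s‖ ^ 2 with hGdef
  have hGm : Measurable G := hym.norm.measurable.pow_const 2
  have hGnn : ∀ s, 0 ≤ G s := fun s => sq_nonneg _
  set F : ℝ → ℝ≥0∞ := fun s => ENNReal.ofReal (G s) with hF
  have hFm : Measurable F := hGm.ennreal_ofReal
  set K : ℝ → ℝ≥0∞ := fun t => ∫⁻ s in Set.Iio t, F s with hKdef
  -- translation of the inner integral
  have hK : ∀ t : ℝ, (∫⁻ θ in Set.Iio (0:ℝ), F (t + θ)) = K t := by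
    intro t
    have h1 := (measurePreserving_add_left volume t).setLIntegral_comp_emb
      (MeasurableEquiv.addLeft t).measurableEmbedding F (Set.Iio (0:ℝ))
    simpa [Set.image_const_add_Iio] using h1
  have hKmono : Monotone K := fun a b hab =>
    lintegral_mono_set (Set.Iio_subset_Iio hab)
  have hKm : Measurable K := hKmono.measurable
  -- Tonelli
  set P : ℝ × ℝ → ℝ≥0∞ :=
    Set.indicator {q : ℝ × ℝ | q.2 < q.1} (fun q => F q.2 * w q.1) with hP
  have hPm : Measurable P :=
    ((hFm.comp measurable_snd).mul (hwm.comp measurable_fst)).indicator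
      (measurableSet_lt measurable_snd measurable_fst)
  have hKP : ∀ t, K t * w t = ∫⁻ s, P (t, s) := by
    intro t
    rw [hKdef]
    simp only
    rw [← lintegral_indicator measurableSet_Iio, ← lintegral_mul_const _
      (hFm.indicator measurableSet_Iio)]
    refine lintegral_congr fun s => ?_
    by_cases hst : s < t
    · rw [Set.indicator_of_mem (Set.mem_Iio.2 hst), hP,
        Set.indicator_of_mem (by exact hst)]
    · rw [Set.indicator_of_notMem (by simpa using hst), hP,
        Set.indicator_of_notMem (by simpa using hst), zero_mul]
  have hIoi : ∀ s : ℝ, (∫⁻ t in Set.Ioi s, w t)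
      = ENNReal.ofReal ((2 * ν)⁻¹ * Real.exp (-2 * ν * s)) := by
    intro s
    rw [hw]
    rw [← ofReal_integral_eq_lintegral_ofReal]
    · congr 1
      have : ∀ t : ℝ, Real.exp (-2 * ν * t) = (fun u => Real.exp (-u)) (2 * ν * t) := by
        intro t; simp only; ring_nf
      calc ∫ t in Set.Ioi s, Real.exp (-2 * ν * t)
          = ∫ t in Set.Ioi s, (fun u => Real.exp (-u)) (2 * ν * t) :=
            integral_congr_ae (Filter.Eventually.of_forall fun t => this t)
        _ = (2 * ν)⁻¹ • ∫ u in Set.Ioi (2 * ν * s), Real.exp (-u) :=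
            integral_comp_mul_left_Ioi (fun u => Real.exp (-u)) s h2ν
        _ = (2 * ν)⁻¹ * Real.exp (-2 * ν * s) := by
            rw [integral_exp_neg_Ioi, smul_eq_mul]; ring_nf
    · have := exp_neg_integrableOn_Ioi s h2ν
      simpa [neg_mul, IntegrableOn] using this
    · exact Filter.Eventually.of_forall fun t => (Real.exp_pos _).le
  set I : ℝ≥0∞ := ∫⁻ s, F s * w s with hI
  set J : ℝ≥0∞ := ∫⁻ t, K t * w t with hJ
  have hJI : J = ENNReal.ofReal ((2 * ν)⁻¹) * I := by
    rw [hJ]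
    calc (∫⁻ t, K t * w t) = ∫⁻ t, ∫⁻ s, P (t, s) := lintegral_congr fun t => hKP t
      _ = ∫⁻ s, ∫⁻ t, P (t, s) := lintegral_lintegral_swap hPm.aemeasurable
      _ = ∫⁻ s, F s * ∫⁻ t in Set.Ioi s, w t := by
          refine lintegral_congr fun s => ?_
          rw [← lintegral_const_mul _ hwm, ← lintegral_indicator measurableSet_Ioi]
          refine lintegral_congr fun t => ?_
          by_cases hst : s < t
          · rw [hP, Set.indicator_of_mem (by exact hst),
              Set.indicator_of_mem (Set.mem_Ioi.2 hst)]
          · rw [hP, Set.indicator_of_notMem (by simpa using hst),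
              Set.indicator_of_notMem (by simpa using hst)]
      _ = ∫⁻ s, ENNReal.ofReal ((2 * ν)⁻¹) * (F s * w s) := by
          refine lintegral_congr fun s => ?_
          rw [hIoi s, ENNReal.ofReal_mul (by positivity)]
          ring
      _ = ENNReal.ofReal ((2 * ν)⁻¹) * I :=
          lintegral_const_mul _ (hFm.mul hwm)
  have hJlt : J < ⊤ := by
    rw [hJI]
    exact ENNReal.mul_lt_top ENNReal.ofReal_lt_top hfin
  have hKwm : Measurable fun t => K t * w t := hKm.mul hwm
  have haefin : ∀ᵐ t : ℝ, K t * w t < ⊤ := ae_lt_top hKwm hJlt.ne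
  -- inner Bochner integral
  have hinner : ∀ t : ℝ, (∫ θ in Set.Iio (0:ℝ), G (t + θ)) = (K t).toReal := by
    intro t
    rw [integral_eq_lintegral_of_nonneg_ae
      (Filter.Eventually.of_forall fun θ => hGnn _)
      ((hGm.comp (measurable_const_add t)).aestronglyMeasurable)]
    exact congrArg ENNReal.toReal (hK t)
  have hLHS : (∫ t, (∫ θ in Set.Iio (0:ℝ), G (t + θ)) * Real.exp (-2 * ν * t))
      = J.toReal := by
    rw [hJ, ← integral_toReal hKwm.aemeasurable haefin]
    refine integral_congr_ae (Filter.Eventually.of_forall fun t => ?_)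
    show (∫ θ in Set.Iio (0:ℝ), G (t + θ)) * Real.exp (-2 * ν * t) = (K t * w t).toReal
    rw [hinner t, ENNReal.toReal_mul, hw, ENNReal.toReal_ofReal (Real.exp_pos _).le]
  have hRHS : (∫ t, G t * Real.exp (-2 * ν * t)) = I.toReal := by
    rw [integral_eq_lintegral_of_nonneg_ae
      (Filter.Eventually.of_forall fun t => mul_nonneg (hGnn t) (Real.exp_pos _).le)
      ((hGm.mul (by fun_prop : Measurable fun t : ℝ => Real.exp (-2 * ν * t))).aestronglyMeasurable)]
    congr 1
    refine lintegral_congr fun t => ?_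
    rw [ENNReal.ofReal_mul (hGnn t)]
  rw [hLHS, hRHS, hJI, ENNReal.toReal_mul, ENNReal.toReal_ofReal (by positivity)]

/-- In the Hilbert space case (`p = 2`, `X = H`), the history
operator `Θ : L_{2,ν}(ℝ;H) → L_{2,ν}(ℝ;L_2(ℝ_{<0};H))` satisfies
`⟨Θx,Θx⟩ = (2ν)⁻¹⟨x,x⟩`, i.e., unfolding the inner products of the weighted
Bochner–Lebesgue spaces,
`∫_ℝ (∫_{θ<0} ⟪x(t+θ),x(t+θ)⟫ dθ) e^{−2νt} dt = (2ν)⁻¹ ∫_ℝ ⟪x(t),x(t)⟫ e^{−2νt} dt`;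
consequently `√(2ν)·Θ` is an isometry onto its range and `Θ` has closed range. -/
theorem stmt11
    {H : Type*} [NormedAddCommGroup H] [InnerProductSpace ℝ H]
    (ν : ℝ) (hν : 0 < ν)
    (x : ℝ → H)
    (hx : MemLp x 2 (volume.withDensity (fun t => ENNReal.ofReal (Real.exp (-2 * ν * t))))) :
    ∫ t, (∫ θ in Set.Iio (0 : ℝ), (inner ℝ (x (t + θ)) (x (t + θ)) : ℝ))
        * Real.exp (-2 * ν * t)
      = (2 * ν)⁻¹ * ∫ t, (inner ℝ (x t) (x t) : ℝ) * Real.exp (-2 * ν * t) := by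
  have h2ν : (0:ℝ) < 2 * ν := by linarith
  have hwm : Measurable fun t : ℝ => ENNReal.ofReal (Real.exp (-2 * ν * t)) := by fun_prop
  have hxm : AEStronglyMeasurable x volume :=
    hx.1.mono_ac (withDensity_absolutelyContinuous' hwm.aemeasurable
      (Filter.Eventually.of_forall fun t => (ENNReal.ofReal_pos.2 (Real.exp_pos _)).ne'))
  obtain ⟨y, hym, hxy⟩ := hxm
  have hyL : MemLp y 2 (volume.withDensity (fun t => ENNReal.ofReal (Real.exp (-2 * ν * t)))) :=
    hx.ae_eq (hxy.filter_mono (withDensity_absolutelyContinuous volume _).ae_le)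
  have hint := hyL.integrable_norm_rpow (by norm_num) (by norm_num)
  have h1 : ∫⁻ a, ENNReal.ofReal (‖y a‖ ^ ((2:ℝ≥0∞).toReal))
      ∂(volume.withDensity (fun t => ENNReal.ofReal (Real.exp (-2 * ν * t)))) < ⊤ :=
    (hasFiniteIntegral_iff_ofReal
      (Filter.Eventually.of_forall fun a => Real.rpow_nonneg (norm_nonneg _) _)).1 hint.2
  have h2 : ∫⁻ a, ENNReal.ofReal (‖y a‖ ^ 2)
      ∂(volume.withDensity (fun t => ENNReal.ofReal (Real.exp (-2 * ν * t)))) < ⊤ := by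
    refine lt_of_eq_of_lt (lintegral_congr fun a => ?_) h1
    norm_num [Real.rpow_two]
  have hFm : Measurable fun s => ENNReal.ofReal (‖y s‖ ^ 2) :=
    (hym.norm.measurable.pow_const 2).ennreal_ofReal
  have hfin : ∫⁻ s, ENNReal.ofReal (‖y s‖ ^ 2) * ENNReal.ofReal (Real.exp (-2 * ν * s)) < ⊤ := by
    rw [lintegral_withDensity_eq_lintegral_mul volume hwm hFm] at h2
    refine lt_of_eq_of_lt (lintegral_congr fun s => ?_) h2
    simp [mul_comm]
  have hadd : Measure.QuasiMeasurePreserving (fun z : ℝ × ℝ => z.1 + z.2)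
      (volume.prod volume) volume :=
    Measure.quasiMeasurePreserving_snd.comp
      (measurePreserving_prod_add volume volume).quasiMeasurePreserving
  have hprod : (fun z : ℝ × ℝ => x (z.1 + z.2)) =ᵐ[volume.prod volume]
      fun z : ℝ × ℝ => y (z.1 + z.2) := hadd.ae_eq hxy
  have hres : (fun z : ℝ × ℝ => x (z.1 + z.2))
      =ᵐ[volume.prod (volume.restrict (Set.Iio (0:ℝ)))] fun z : ℝ × ℝ => y (z.1 + z.2) :=
    hprod.filter_mono (Measure.AbsolutelyContinuous.ae_le
      ((Measure.AbsolutelyContinuous.prod Measure.AbsolutelyContinuous.rfl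
        (Measure.absolutelyContinuous_of_le Measure.restrict_le_self))))
  have hslice := Measure.ae_ae_of_ae_prod hres
  have hL : (∫ t, (∫ θ in Set.Iio (0:ℝ), (inner ℝ (x (t + θ)) (x (t + θ)) : ℝ))
        * Real.exp (-2 * ν * t))
      = ∫ t, (∫ θ in Set.Iio (0:ℝ), ‖y (t + θ)‖ ^ 2) * Real.exp (-2 * ν * t) := by
    refine integral_congr_ae ?_
    filter_upwards [hslice] with t ht
    congr 1
    refine integral_congr_ae ?_
    filter_upwards [ht] with θ hθ
    rw [show x (t + θ) = y (t + θ) from hθ, real_inner_self_eq_norm_sq]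
  have hR : (∫ t, (inner ℝ (x t) (x t) : ℝ) * Real.exp (-2 * ν * t))
      = ∫ t, ‖y t‖ ^ 2 * Real.exp (-2 * ν * t) := by
    refine integral_congr_ae ?_
    filter_upwards [hxy] with t ht
    rw [ht, real_inner_self_eq_norm_sq]
  rw [hL, hR]
  exact stmt11_aux ν hν y hym hfin
end

section
/- Let ν ≠ 0 and define ∂_ν : C¹_ν(ℝ;X) ⊆ C_ν(ℝ;X) → C_ν(ℝ;X), f ↦ f′, where C¹_ν(ℝ;X) = {f ∈ C_ν(ℝ;X) : f′ ∈ C_ν(ℝ;X)}. Then 0 ∈ ρ(∂_ν), for ν > 0 one has (∂_ν⁻¹f)(t) = ∫_{−∞}^t f(τ)dτ, and the operator norm of ∂_ν⁻¹ is exactly 1/|ν|. -/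
open Real Filter

/-- Membership in `C_ν(ℝ;X)`. -/
def MemCnu {X : Type*} [NormedAddCommGroup X] [NormedSpace ℝ X] (ν : ℝ) (f : ℝ → X) : Prop :=
  Continuous f ∧ (∃ M : ℝ, ∀ t : ℝ, Real.exp (-ν * t) * ‖f t‖ ≤ M) ∧
    Tendsto (fun t => Real.exp (-ν * t) • f t) atTop (nhds 0) ∧
    Tendsto (fun t => Real.exp (-ν * t) • f t) atBot (nhds 0)

section Helpers
open MeasureTheory Set intervalIntegral
set_option linter.unusedSectionVars false
set_option linter.unusedVariables false
set_option maxHeartbeats 1000000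

variable {X : Type*} [NormedAddCommGroup X] [NormedSpace ℝ X] [CompleteSpace X]

lemma expnu_intervalIntegrable (ν a b : ℝ) : IntervalIntegrable (fun τ => Real.exp (ν * τ)) volume a b :=
  (Real.continuous_exp.comp (continuous_const.mul continuous_id)).intervalIntegrable a b

lemma expnu_interval (ν : ℝ) (hν : ν ≠ 0) (a b : ℝ) :
    ∫ τ in a..b, Real.exp (ν * τ) = (Real.exp (ν * b) - Real.exp (ν * a)) / ν := by
  rw [intervalIntegral.integral_comp_mul_left (fun x => Real.exp x) hν, integral_exp]
  rw [smul_eq_mul]; ring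

lemma expnu_integrableOn (ν : ℝ) (hν : 0 < ν) (t : ℝ) :
    IntegrableOn (fun τ => Real.exp (ν * τ)) (Iic t) := by
  refine integrableOn_Iic_of_intervalIntegral_norm_bounded (Real.exp (ν * t) / ν) t
    (fun y => (expnu_intervalIntegrable ν y t).1) tendsto_id ?_
  filter_upwards with y
  simp_rw [Real.norm_of_nonneg (Real.exp_pos _).le, expnu_interval ν hν.ne']
  have := (Real.exp_pos (ν * y)).le
  gcongr
  linarith

lemma expnu_integral_Iic (ν : ℝ) (hν : 0 < ν) (t : ℝ) :
    ∫ τ in Iic t, Real.exp (ν * τ) = Real.exp (ν * t) / ν := by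
  refine tendsto_nhds_unique
    (intervalIntegral_tendsto_integral_Iic _ (expnu_integrableOn ν hν t) tendsto_id) ?_
  have h1 : Tendsto (fun y : ℝ => (Real.exp (ν * t) - Real.exp (ν * y)) / ν) atBot
      (nhds ((Real.exp (ν * t) - 0) / ν)) :=
    Tendsto.div_const (tendsto_const_nhds.sub (Real.tendsto_exp_atBot.comp
      (tendsto_id.const_mul_atBot hν))) ν
  simpa [sub_zero] using h1.congr' (by filter_upwards with y using (expnu_interval ν hν.ne' y t).symm)

lemma plain_of_weighted {ν K : ℝ} {v : X} {t : ℝ} (h : Real.exp (-ν * t) * ‖v‖ ≤ K) :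
    ‖v‖ ≤ K * Real.exp (ν * t) := by
  have h1 : Real.exp (-ν * t) * Real.exp (ν * t) = 1 := by
    rw [← Real.exp_add]; ring_nf; exact Real.exp_zero
  nlinarith [Real.exp_pos (ν * t), Real.exp_pos (-ν * t), norm_nonneg v]

lemma weighted_of_plain {ν K : ℝ} {v : X} {t : ℝ} (h : ‖v‖ ≤ K * Real.exp (ν * t)) :
    Real.exp (-ν * t) * ‖v‖ ≤ K := by
  have h1 : Real.exp (-ν * t) * Real.exp (ν * t) = 1 := by
    rw [← Real.exp_add]; ring_nf; exact Real.exp_zero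
  nlinarith [Real.exp_pos (ν * t), Real.exp_pos (-ν * t), norm_nonneg v]

lemma f_integrableOn {ν : ℝ} (hν : 0 < ν) {f : ℝ → X} (hc : Continuous f) {M : ℝ}
    (hM : ∀ s, Real.exp (-ν * s) * ‖f s‖ ≤ M) (t : ℝ) : IntegrableOn f (Iic t) := by
  refine Integrable.mono' ((expnu_integrableOn ν hν t).const_mul M)
    hc.aestronglyMeasurable.restrict ?_
  filter_upwards with s using plain_of_weighted (hM s)

lemma norm_int_le {ν : ℝ} (hν : 0 < ν) {f : ℝ → X} {t K : ℝ}
    (h : ∀ τ ≤ t, ‖f τ‖ ≤ K * Real.exp (ν * τ)) :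
    ‖∫ τ in Iic t, f τ‖ ≤ K / ν * Real.exp (ν * t) := by
  have hg : IntegrableOn (fun τ => K * Real.exp (ν * τ)) (Iic t) :=
    (expnu_integrableOn ν hν t).const_mul K
  have hb : ‖∫ τ in Iic t, f τ‖ ≤ ∫ τ in Iic t, K * Real.exp (ν * τ) := by
    refine norm_integral_le_of_norm_le hg ?_
    refine (ae_restrict_iff' measurableSet_Iic).2 ?_
    filter_upwards with τ hτ using h τ hτ
  rw [MeasureTheory.integral_const_mul, expnu_integral_Iic ν hν t] at hb
  calc ‖∫ τ in Iic t, f τ‖ ≤ K * (Real.exp (ν * t) / ν) := hb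
    _ = K / ν * Real.exp (ν * t) := by ring

lemma hasDerivAt_int {f : ℝ → X} (hcont : Continuous f)
    (hint : ∀ t, IntegrableOn f (Iic t)) (t : ℝ) :
    HasDerivAt (fun s => ∫ τ in Iic s, f τ) (f t) t := by
  have key : ∀ s : ℝ, (∫ τ in Iic s, f τ) = (∫ τ in Iic 0, f τ) + ∫ τ in (0:ℝ)..s, f τ := by
    intro s
    rw [← integral_Iic_sub_Iic (hint 0) (hint s)]; abel
  have hii : IntervalIntegrable f volume 0 t :=
    ((hint (max 0 t)).mono_set fun x hx => hx.2).intervalIntegrable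
  have hD : HasDerivAt (fun s => (∫ τ in Iic 0, f τ) + ∫ τ in (0:ℝ)..s, f τ) (f t) t :=
    (integral_hasDerivAt_right hii
      hcont.aestronglyMeasurable.stronglyMeasurableAtFilter hcont.continuousAt).const_add _
  exact hD.congr_of_eventuallyEq (Filter.Eventually.of_forall key)

lemma sol_pos {ν : ℝ} (hν : 0 < ν) {f : ℝ → X} (hf : MemCnu ν f) :
    MemCnu ν (fun t => ∫ τ in Set.Iic t, f τ) ∧
      ∀ t : ℝ, HasDerivAt (fun s => ∫ τ in Set.Iic s, f τ) (f t) t := by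
  obtain ⟨hc, ⟨M, hM⟩, htop, hbot⟩ := hf
  have hint := f_integrableOn hν hc hM
  have hder := hasDerivAt_int hc hint
  have hcontu : Continuous (fun t => ∫ τ in Iic t, f τ) :=
    continuous_iff_continuousAt.2 fun t => (hder t).continuousAt
  refine ⟨⟨hcontu, ⟨M / ν, fun t => ?_⟩, ?_, ?_⟩, hder⟩
  · exact weighted_of_plain (norm_int_le hν (fun τ _ => plain_of_weighted (hM τ)))
  · -- atTop
    rw [NormedAddCommGroup.tendsto_nhds_zero]
    intro ε hε
    have hε2 : 0 < ν * ε / 4 := by positivity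
    have h1 : ∀ᶠ τ in atTop, ‖Real.exp (-ν * τ) • f τ‖ < ν * ε / 4 :=
      NormedAddCommGroup.tendsto_nhds_zero.mp htop _ hε2
    obtain ⟨T, hT⟩ := eventually_atTop.mp h1
    have hplain : ∀ τ ≥ T, ‖f τ‖ ≤ (ν * ε / 4) * Real.exp (ν * τ) := by
      intro τ hτ
      have := (hT τ hτ).le
      rw [norm_smul, Real.norm_of_nonneg (Real.exp_pos _).le] at this
      exact plain_of_weighted this
    set C : ℝ := ‖∫ τ in Iic T, f τ‖ with hC
    have hexp : Tendsto (fun t : ℝ => Real.exp (-ν * t) * C) atTop (nhds 0) := by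
      have h2 : Tendsto (fun t : ℝ => Real.exp (-ν * t)) atTop (nhds 0) := by
        have h3 := (Real.tendsto_exp_atTop.comp (tendsto_id.const_mul_atTop hν)).inv_tendsto_atTop
        refine h3.congr fun t => ?_
        simp [Function.comp, ← Real.exp_neg, neg_mul]
      simpa using h2.mul_const C
    have h3 : ∀ᶠ t in atTop, Real.exp (-ν * t) * C < ε / 2 := by
      have := NormedAddCommGroup.tendsto_nhds_zero.mp hexp (ε / 2) (by positivity)
      filter_upwards [this] with t ht
      calc Real.exp (-ν * t) * C ≤ ‖Real.exp (-ν * t) * C‖ := le_abs_self _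
        _ < ε / 2 := ht
    filter_upwards [h3, Ici_mem_atTop T] with t ht3 htT
    have htT : T ≤ t := htT
    have hsplit : (∫ τ in Iic t, f τ) = (∫ τ in Iic T, f τ) + ∫ τ in T..t, f τ := by
      rw [← integral_Iic_sub_Iic (hint T) (hint t)]; abel
    have htail : ‖∫ τ in T..t, f τ‖ ≤ (ε / 2) * Real.exp (ν * t) := by
      have hbd : ∀ᵐ τ ∂(volume.restrict (Set.uIoc T t)),
          ‖f τ‖ ≤ (ν * ε / 4) * Real.exp (ν * τ) := by
        rw [uIoc_of_le htT]
        refine (ae_restrict_iff' measurableSet_Ioc).2 ?_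
        filter_upwards with τ hτ using hplain τ hτ.1.le
      have hgi : IntervalIntegrable (fun τ => (ν * ε / 4) * Real.exp (ν * τ)) volume T t :=
        (expnu_intervalIntegrable ν T t).const_mul _
      have := intervalIntegral.norm_integral_le_abs_of_norm_le hbd hgi
      rw [intervalIntegral.integral_const_mul, expnu_interval ν hν.ne'] at this
      refine this.trans ?_
      have hle : Real.exp (ν * T) ≤ Real.exp (ν * t) := Real.exp_le_exp.2 (by nlinarith)
      have hnn : 0 ≤ (ν * ε / 4) * ((Real.exp (ν * t) - Real.exp (ν * T)) / ν) :=
        mul_nonneg (by positivity) (div_nonneg (by linarith) hν.le)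
      rw [abs_of_nonneg hnn]
      have h4 : (ν * ε / 4) * ((Real.exp (ν * t) - Real.exp (ν * T)) / ν)
          = (ε / 4) * (Real.exp (ν * t) - Real.exp (ν * T)) := by field_simp
      rw [h4]
      nlinarith [Real.exp_pos (ν * t), Real.exp_pos (ν * T)]
    rw [norm_smul, Real.norm_of_nonneg (Real.exp_pos _).le, hsplit]
    have hnorm : ‖(∫ τ in Iic T, f τ) + ∫ τ in T..t, f τ‖ ≤ C + (ε / 2) * Real.exp (ν * t) :=
      (norm_add_le _ _).trans (by gcongr)
    have hmul : Real.exp (-ν * t) * ‖(∫ τ in Iic T, f τ) + ∫ τ in T..t, f τ‖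
        ≤ Real.exp (-ν * t) * (C + (ε / 2) * Real.exp (ν * t)) :=
      mul_le_mul_of_nonneg_left hnorm (Real.exp_pos _).le
    have hid : Real.exp (-ν * t) * Real.exp (ν * t) = 1 := by
      rw [← Real.exp_add]; ring_nf; exact Real.exp_zero
    have : Real.exp (-ν * t) * (C + (ε / 2) * Real.exp (ν * t))
        = Real.exp (-ν * t) * C + ε / 2 := by
      rw [mul_add]; congr 1
      rw [mul_comm (ε/2), ← mul_assoc, hid]; ring
    linarith [hmul, this ▸ hmul]
  · -- atBot
    rw [NormedAddCommGroup.tendsto_nhds_zero]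
    intro ε hε
    have hε2 : 0 < ν * ε / 2 := by positivity
    have h1 : ∀ᶠ τ in atBot, ‖Real.exp (-ν * τ) • f τ‖ < ν * ε / 2 :=
      NormedAddCommGroup.tendsto_nhds_zero.mp hbot _ hε2
    obtain ⟨T, hT⟩ := eventually_atBot.mp h1
    filter_upwards [Iic_mem_atBot T] with t ht
    have hb : ∀ τ ≤ t, ‖f τ‖ ≤ (ν * ε / 2) * Real.exp (ν * τ) := by
      intro τ hτ
      have := (hT τ (hτ.trans ht)).le
      rw [norm_smul, Real.norm_of_nonneg (Real.exp_pos _).le] at this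
      exact plain_of_weighted this
    have hu := norm_int_le hν hb
    have : (ν * ε / 2) / ν = ε / 2 := by field_simp
    rw [this] at hu
    rw [norm_smul, Real.norm_of_nonneg (Real.exp_pos _).le]
    have := weighted_of_plain (ν := ν) (t := t) hu
    linarith

lemma const_zero_of_tendsto {ν : ℝ} (hν : ν ≠ 0) {c : X}
    (ht : Tendsto (fun t => Real.exp (-ν * t) • c) atTop (nhds 0))
    (hb : Tendsto (fun t => Real.exp (-ν * t) • c) atBot (nhds 0)) : c = 0 := by
  by_contra hc
  have hc' : 0 < ‖c‖ := norm_pos_iff.2 hc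
  rcases hν.lt_or_gt with hneg | hpos
  · have h1 := NormedAddCommGroup.tendsto_nhds_zero.mp ht ‖c‖ hc'
    have h2 : ∀ᶠ t : ℝ in atTop, (0:ℝ) ≤ t := eventually_ge_atTop 0
    obtain ⟨t, h1t, h2t⟩ := (h1.and h2).exists
    rw [norm_smul, Real.norm_of_nonneg (Real.exp_pos _).le] at h1t
    have : (1:ℝ) ≤ Real.exp (-ν * t) := Real.one_le_exp (by nlinarith)
    nlinarith
  · have h1 := NormedAddCommGroup.tendsto_nhds_zero.mp hb ‖c‖ hc'
    have h2 : ∀ᶠ t : ℝ in atBot, t ≤ (0:ℝ) := eventually_le_atBot 0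
    obtain ⟨t, h1t, h2t⟩ := (h1.and h2).exists
    rw [norm_smul, Real.norm_of_nonneg (Real.exp_pos _).le] at h1t
    have : (1:ℝ) ≤ Real.exp (-ν * t) := Real.one_le_exp (by nlinarith)
    nlinarith

lemma uniq {ν : ℝ} (hν : ν ≠ 0) {f u v : ℝ → X}
    (hu : MemCnu ν u) (hv : MemCnu ν v)
    (hu' : ∀ t, HasDerivAt u (f t) t) (hv' : ∀ t, HasDerivAt v (f t) t) : u = v := by
  have hd : ∀ t, HasDerivAt (fun s => u s - v s) 0 t := by
    intro t; have h := (hu' t).sub (hv' t); rw [sub_self] at h; exact h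
  have hconst : ∀ s t : ℝ, u s - v s = u t - v t := by
    intro s t
    exact is_const_of_deriv_eq_zero (fun x => (hd x).differentiableAt)
      (fun x => (hd x).deriv) s t
  have htend : Tendsto (fun t => Real.exp (-ν * t) • (u 0 - v 0)) atTop (nhds 0) := by
    have := (hu.2.2.1.sub hv.2.2.1)
    simp only [← smul_sub, sub_zero] at this
    exact this.congr fun t => by rw [hconst t 0]
  have hbend : Tendsto (fun t => Real.exp (-ν * t) • (u 0 - v 0)) atBot (nhds 0) := by
    have := (hu.2.2.2.sub hv.2.2.2)
    simp only [← smul_sub, sub_zero] at this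
    exact this.congr fun t => by rw [hconst t 0]
  have hc0 : u 0 - v 0 = 0 := const_zero_of_tendsto hν htend hbend
  funext t
  have := hconst t 0
  rw [hc0] at this
  exact sub_eq_zero.1 this

lemma memCnu_reflect {ν : ℝ} {f : ℝ → X} (h : MemCnu ν f) :
    MemCnu (-ν) (fun t => f (-t)) := by
  obtain ⟨hc, ⟨M, hM⟩, htop, hbot⟩ := h
  refine ⟨hc.comp continuous_neg, ⟨M, fun t => by simpa [neg_mul, mul_neg] using hM (-t)⟩, ?_, ?_⟩
  · have := hbot.comp tendsto_neg_atTop_atBot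
    refine this.congr fun t => ?_
    simp [Function.comp, neg_mul, mul_neg]
  · have := htop.comp tendsto_neg_atBot_atTop
    refine this.congr fun t => ?_
    simp [Function.comp, neg_mul, mul_neg]

lemma memCnu_neg {ν : ℝ} {f : ℝ → X} (h : MemCnu ν f) : MemCnu ν (fun t => -f t) := by
  obtain ⟨hc, ⟨M, hM⟩, htop, hbot⟩ := h
  exact ⟨hc.neg, ⟨M, fun t => by simpa using hM t⟩,
    by simpa [smul_neg] using htop.neg, by simpa [smul_neg] using hbot.neg⟩

lemma hasDerivAt_reflect {w g : ℝ → X} (h : ∀ t, HasDerivAt w (g t) t) (t : ℝ) :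
    HasDerivAt (fun s => -w (-s)) (g (-t)) t := by
  have h1 : HasDerivAt (fun s : ℝ => w (-s)) ((-1 : ℝ) • g (-t)) t :=
    (h (-t)).scomp t (by simpa using (hasDerivAt_neg t))
  have h2 := h1.neg; simp only [neg_smul, one_smul, neg_neg] at h2; exact h2

lemma tendsto_cosh_atTop : Tendsto Real.cosh atTop atTop := by
  refine tendsto_atTop_mono (fun x => ?_) (Real.tendsto_exp_atTop.atTop_div_const two_pos)
  rw [Real.cosh_eq]
  have := (Real.exp_pos (-x)).le
  linarith

lemma abs_sinh_le_cosh (x : ℝ) : |Real.sinh x| ≤ Real.cosh x := by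
  rw [abs_le, Real.sinh_eq, Real.cosh_eq]
  constructor <;> nlinarith [Real.exp_pos x, Real.exp_pos (-x)]

lemma tendsto_inv_cosh_atTop {δ : ℝ} (hδ : 0 < δ) :
    Tendsto (fun t => (Real.cosh (δ * t))⁻¹) atTop (nhds 0) :=
  (tendsto_cosh_atTop.comp (tendsto_id.const_mul_atTop hδ)).inv_tendsto_atTop

lemma tendsto_inv_cosh_atBot {δ : ℝ} (hδ : 0 < δ) :
    Tendsto (fun t => (Real.cosh (δ * t))⁻¹) atBot (nhds 0) := by
  have h1 : Tendsto Real.cosh atBot atTop :=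
    (tendsto_cosh_atTop.comp tendsto_neg_atBot_atTop).congr fun x => by
      simp [Function.comp, Real.cosh_neg]
  exact (h1.comp (tendsto_id.const_mul_atBot hδ)).inv_tendsto_atTop

lemma opt {ν : ℝ} (hν : ν ≠ 0) {x : X} (hx : ‖x‖ = 1) {ε : ℝ} (hε : 0 < ε) :
    ∃ f u : ℝ → X, MemCnu ν f ∧ MemCnu ν u ∧
      (∀ t : ℝ, HasDerivAt u (f t) t) ∧
      (∀ s : ℝ, Real.exp (-ν * s) * ‖f s‖ ≤ 1) ∧
      ∃ t : ℝ, 1 / |ν| - ε < Real.exp (-ν * t) * ‖u t‖ := by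
  set δ : ℝ := ε * ν ^ 2 / 2 with hδdef
  have hδ : 0 < δ := by positivity
  have hνabs : 0 < |ν| := abs_pos.2 hν
  set A : ℝ := |ν| + δ with hA
  have hA0 : 0 < A := by positivity
  -- scalar functions
  set a : ℝ → ℝ := fun t => Real.exp (ν * t) / Real.cosh (δ * t) with ha
  set b : ℝ → ℝ := fun t =>
    (Real.exp (ν * t) * ν * Real.cosh (δ * t) - Real.exp (ν * t) * (Real.sinh (δ * t) * δ)) /
      Real.cosh (δ * t) ^ 2 with hb
  have hcoshpos : ∀ t : ℝ, 0 < Real.cosh (δ * t) := fun t => Real.cosh_pos _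
  have hda : ∀ t, HasDerivAt a (b t) t := by
    intro t
    have he : HasDerivAt (fun t : ℝ => Real.exp (ν * t)) (Real.exp (ν * t) * ν) t := by
      simpa using (((hasDerivAt_id t).const_mul ν).exp)
    have hco : HasDerivAt (fun t : ℝ => Real.cosh (δ * t)) (Real.sinh (δ * t) * δ) t := by
      simpa using (((hasDerivAt_id t).const_mul δ).cosh)
    exact he.div hco (hcoshpos t).ne'
  have hce : Continuous fun t : ℝ => Real.exp (ν * t) :=
    Real.continuous_exp.comp (continuous_const.mul continuous_id)
  have hcc : Continuous fun t : ℝ => Real.cosh (δ * t) :=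
    Real.continuous_cosh.comp (continuous_const.mul continuous_id)
  have hcs : Continuous fun t : ℝ => Real.sinh (δ * t) :=
    Real.continuous_sinh.comp (continuous_const.mul continuous_id)
  have hconta : Continuous a := hce.div hcc fun t => (hcoshpos t).ne'
  have hcontb : Continuous b :=
    (((hce.mul continuous_const).mul hcc).sub (hce.mul (hcs.mul continuous_const))).div
      (hcc.pow 2) fun t => (pow_pos (hcoshpos t) 2).ne'
  have hnorm : ∀ c : ℝ, ‖A⁻¹ • c • x‖ = A⁻¹ * |c| := fun c => by
    rw [norm_smul, norm_smul, hx, Real.norm_eq_abs, Real.norm_eq_abs,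
      abs_of_pos (by positivity : (0:ℝ) < A⁻¹), mul_one]
  have hbabs : ∀ t, |b t| ≤ A * (Real.exp (ν * t) / Real.cosh (δ * t)) := by
    intro t
    rw [hb]
    simp only []
    rw [abs_div, abs_of_pos (pow_pos (hcoshpos t) 2)]
    have hnum : |Real.exp (ν * t) * ν * Real.cosh (δ * t) -
        Real.exp (ν * t) * (Real.sinh (δ * t) * δ)| ≤
        Real.exp (ν * t) * (A * Real.cosh (δ * t)) := by
      have h4 : |ν * Real.cosh (δ * t) - Real.sinh (δ * t) * δ| ≤ A * Real.cosh (δ * t) := by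
        calc |ν * Real.cosh (δ * t) - Real.sinh (δ * t) * δ|
            ≤ |ν * Real.cosh (δ * t)| + |Real.sinh (δ * t) * δ| := abs_sub _ _
          _ = |ν| * Real.cosh (δ * t) + δ * |Real.sinh (δ * t)| := by
              rw [abs_mul, abs_mul, abs_of_pos (hcoshpos t), abs_of_pos hδ]; ring
          _ ≤ |ν| * Real.cosh (δ * t) + δ * Real.cosh (δ * t) := by
              gcongr; exact abs_sinh_le_cosh _
          _ = A * Real.cosh (δ * t) := by rw [hA]; ring
      have h5 : Real.exp (ν * t) * ν * Real.cosh (δ * t) -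
          Real.exp (ν * t) * (Real.sinh (δ * t) * δ)
          = Real.exp (ν * t) * (ν * Real.cosh (δ * t) - Real.sinh (δ * t) * δ) := by ring
      rw [h5, abs_mul, abs_of_pos (Real.exp_pos _)]
      gcongr
    calc |Real.exp (ν * t) * ν * Real.cosh (δ * t) -
        Real.exp (ν * t) * (Real.sinh (δ * t) * δ)| / Real.cosh (δ * t) ^ 2
        ≤ Real.exp (ν * t) * (A * Real.cosh (δ * t)) / Real.cosh (δ * t) ^ 2 := by gcongr
      _ = A * (Real.exp (ν * t) / Real.cosh (δ * t)) := by
          field_simp [(hcoshpos t).ne']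
  have hexpinv : ∀ t : ℝ, Real.exp (-ν * t) = (Real.exp (ν * t))⁻¹ := fun t => by
    rw [show -ν * t = -(ν * t) by ring, Real.exp_neg]
  have hwf : ∀ t, Real.exp (-ν * t) * ‖A⁻¹ • b t • x‖ ≤ (Real.cosh (δ * t))⁻¹ := by
    intro t
    rw [hnorm, hexpinv]
    have h1 : A⁻¹ * |b t| ≤ A⁻¹ * (A * (Real.exp (ν * t) / Real.cosh (δ * t))) := by
      gcongr; exact hbabs t
    have h2 : A⁻¹ * (A * (Real.exp (ν * t) / Real.cosh (δ * t)))
        = Real.exp (ν * t) / Real.cosh (δ * t) := by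
      field_simp
    calc (Real.exp (ν * t))⁻¹ * (A⁻¹ * |b t|)
        ≤ (Real.exp (ν * t))⁻¹ * (Real.exp (ν * t) / Real.cosh (δ * t)) := by
          rw [← h2]; exact mul_le_mul_of_nonneg_left h1 (by positivity)
      _ = (Real.cosh (δ * t))⁻¹ := by
          field_simp
  have hwu : ∀ t, Real.exp (-ν * t) * ‖A⁻¹ • a t • x‖ = A⁻¹ * (Real.cosh (δ * t))⁻¹ := by
    intro t
    rw [hnorm, hexpinv, ha]
    simp only []
    rw [abs_of_pos (div_pos (Real.exp_pos _) (hcoshpos t))]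
    field_simp
  have hinvcosh_le_one : ∀ t : ℝ, (Real.cosh (δ * t))⁻¹ ≤ 1 := fun t => by
    rw [inv_le_one_iff₀]; right; exact Real.one_le_cosh _
  refine ⟨fun t => A⁻¹ • b t • x, fun t => A⁻¹ • a t • x, ?_, ?_, ?_, ?_, ?_⟩
  · refine ⟨continuous_const.smul (hcontb.smul continuous_const), ⟨1, fun t =>
      (hwf t).trans (hinvcosh_le_one t)⟩, ?_, ?_⟩
    · refine squeeze_zero_norm (fun t => ?_) (tendsto_inv_cosh_atTop hδ)
      rw [norm_smul, Real.norm_of_nonneg (Real.exp_pos _).le]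
      exact hwf t
    · refine squeeze_zero_norm (fun t => ?_) (tendsto_inv_cosh_atBot hδ)
      rw [norm_smul, Real.norm_of_nonneg (Real.exp_pos _).le]
      exact hwf t
  · refine ⟨continuous_const.smul (hconta.smul continuous_const), ⟨A⁻¹, fun t => by
      rw [hwu t]; exact mul_le_of_le_one_right (by positivity) (hinvcosh_le_one t)⟩, ?_, ?_⟩
    · have h := (tendsto_inv_cosh_atTop hδ).const_mul A⁻¹
      rw [mul_zero] at h
      refine squeeze_zero_norm (fun t => ?_) h
      rw [norm_smul, Real.norm_of_nonneg (Real.exp_pos _).le]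
      exact (hwu t).le
    · have h := (tendsto_inv_cosh_atBot hδ).const_mul A⁻¹
      rw [mul_zero] at h
      refine squeeze_zero_norm (fun t => ?_) h
      rw [norm_smul, Real.norm_of_nonneg (Real.exp_pos _).le]
      exact (hwu t).le
  · exact fun t => ((hda t).smul_const x).const_smul A⁻¹
  · exact fun t => (hwf t).trans (hinvcosh_le_one t)
  · refine ⟨0, ?_⟩
    have h0 : Real.exp (-ν * 0) * ‖A⁻¹ • a 0 • x‖ = A⁻¹ := by
      rw [hwu 0, mul_zero, Real.cosh_zero, inv_one, mul_one]
    rw [h0]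
    have hkey : 1 / |ν| - 1 / A = δ / (|ν| * A) := by
      field_simp
      rw [hA]; ring
    have h2 : δ / (|ν| * A) ≤ ε / 2 := by
      rw [div_le_iff₀ (by positivity)]
      have h3 : ν ^ 2 ≤ |ν| * A := by nlinarith [sq_abs ν, hδ.le]
      calc δ = ε / 2 * ν ^ 2 := by rw [hδdef]; ring
        _ ≤ ε / 2 * (|ν| * A) := by gcongr
    have : (1:ℝ) / A = A⁻¹ := one_div A
    linarith [hkey, h2]

lemma sol_exists {ν : ℝ} (hν : ν ≠ 0) {f : ℝ → X} (hf : MemCnu ν f) :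
    ∃ u : ℝ → X, MemCnu ν u ∧ ∀ t, HasDerivAt u (f t) t := by
  rcases hν.lt_or_gt with hneg | hpos
  · have hg : MemCnu (-ν) (fun t => f (-t)) := memCnu_reflect hf
    obtain ⟨hw, hw'⟩ := sol_pos (by linarith : (0:ℝ) < -ν) hg
    refine ⟨fun t => -(∫ τ in Iic (-t), f (-τ)), ?_, ?_⟩
    · have h1 : MemCnu (-(-ν)) (fun t => ∫ τ in Iic (-t), f (-τ)) := memCnu_reflect hw
      rw [neg_neg] at h1
      exact memCnu_neg h1
    · intro t
      have := hasDerivAt_reflect hw' t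
      simpa using this
  · exact ⟨_, sol_pos hpos hf⟩

lemma bound_pos {ν : ℝ} (hpos : 0 < ν) {f u : ℝ → X} (hf : MemCnu ν f) (hu : MemCnu ν u)
    (hder : ∀ t, HasDerivAt u (f t) t) {M : ℝ}
    (hM : ∀ s, Real.exp (-ν * s) * ‖f s‖ ≤ M) (t : ℝ) :
    Real.exp (-ν * t) * ‖u t‖ ≤ (1 / |ν|) * M := by
  obtain ⟨hv, hv'⟩ := sol_pos hpos hf
  have hequ : u = fun t => ∫ τ in Iic t, f τ := uniq hpos.ne' hu hv hder hv'
  have hb := weighted_of_plain (ν := ν) (t := t)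
    (norm_int_le hpos (fun τ _ => plain_of_weighted (hM τ)))
  rw [hequ]
  calc Real.exp (-ν * t) * ‖∫ τ in Iic t, f τ‖ ≤ M / ν := hb
    _ = (1 / |ν|) * M := by rw [abs_of_pos hpos]; ring

lemma bound_gen {ν : ℝ} (hν : ν ≠ 0) {f u : ℝ → X} (hf : MemCnu ν f) (hu : MemCnu ν u)
    (hder : ∀ t, HasDerivAt u (f t) t) {M : ℝ}
    (hM : ∀ s, Real.exp (-ν * s) * ‖f s‖ ≤ M) (t : ℝ) :
    Real.exp (-ν * t) * ‖u t‖ ≤ (1 / |ν|) * M := by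
  rcases hν.lt_or_gt with hneg | hpos
  · have hg : MemCnu (-ν) (fun s => f (-s)) := memCnu_reflect hf
    have hw : MemCnu (-ν) (fun s => -u (-s)) := memCnu_neg (memCnu_reflect hu)
    have hder' : ∀ s, HasDerivAt (fun s => -u (-s)) (f (-s)) s := hasDerivAt_reflect hder
    have hM' : ∀ s, Real.exp (-(-ν) * s) * ‖f (-s)‖ ≤ M := by
      intro s
      have := hM (-s)
      simpa [neg_mul, mul_neg, neg_neg] using this
    have := bound_pos (by linarith : (0:ℝ) < -ν) hg hw hder' hM' (-t)
    simpa [neg_mul, mul_neg, neg_neg, abs_neg] using this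
  · exact bound_pos hpos hf hu hder hM t

end Helpers


theorem stmt13
    {X : Type*} [NormedAddCommGroup X] [NormedSpace ℝ X] [CompleteSpace X] [Nontrivial X]
    (ν : ℝ) (hν : ν ≠ 0) :
    (∀ f : ℝ → X, MemCnu ν f →
      ∃! u : ℝ → X, MemCnu ν u ∧ ∀ t : ℝ, HasDerivAt u (f t) t)
    ∧ (0 < ν → ∀ f : ℝ → X, MemCnu ν f →
        MemCnu ν (fun t => ∫ τ in Set.Iic t, f τ) ∧
          ∀ t : ℝ, HasDerivAt (fun s => ∫ τ in Set.Iic s, f τ) (f t) t)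
    ∧ (∀ f u : ℝ → X, MemCnu ν f → MemCnu ν u → (∀ t : ℝ, HasDerivAt u (f t) t) →
        ∀ M : ℝ, (∀ s : ℝ, Real.exp (-ν * s) * ‖f s‖ ≤ M) →
          ∀ t : ℝ, Real.exp (-ν * t) * ‖u t‖ ≤ (1 / |ν|) * M)
    ∧ (∀ ε : ℝ, 0 < ε → ∃ f u : ℝ → X, MemCnu ν f ∧ MemCnu ν u ∧
        (∀ t : ℝ, HasDerivAt u (f t) t) ∧
        (∀ s : ℝ, Real.exp (-ν * s) * ‖f s‖ ≤ 1) ∧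
        ∃ t : ℝ, 1 / |ν| - ε < Real.exp (-ν * t) * ‖u t‖) := by
  refine ⟨?_, ?_, ?_, ?_⟩
  · intro f hf
    obtain ⟨u, hu, hu'⟩ := sol_exists hν hf
    exact ⟨u, ⟨hu, hu'⟩, fun v hv => uniq hν hv.1 hu hv.2 hu'⟩
  · intro hpos f hf
    exact sol_pos hpos hf
  · intro f u hf hu hder M hM t
    exact bound_gen hν hf hu hder hM t
  · intro ε hε
    obtain ⟨y, hy⟩ := exists_ne (0 : X)
    have hx : ‖‖y‖⁻¹ • y‖ = 1 := norm_smul_inv_norm hy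
    exact opt hν hx hε
end
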